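/- Let r_0 ∈ (0,1) be the root of 5x + 2(1−x)·log(1−x) = 1. For every r with r_0 < r < 1 there exist functions h(z) = Σ_{k=0}^∞ a_k z^k and g(z) = Σ_{k=1}^∞ b_k z^k analytic on the unit disk 𝔻 with |h(z)| < 1 on 𝔻 and g'(z) = η z h'(z) for some |η| = 1, such that |a_0| + Σ_{k=1}^∞ (|a_k| + |b_k|) r^k > 1. (In particular, the radius r_0 ≈ 0.299824 is best possible.) -/

import Mathlib

open Metric

private lemma Fmono11 {r₀ r : ℝ} (h0 : 0 < r₀) (hr1 : r₀ < r) (hr2 : r < 1)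
    (hroot : 5 * r₀ + 2 * (1 - r₀) * Real.log (1 - r₀) = 1) :
    1 < 5 * r + 2 * (1 - r) * Real.log (1 - r) := by
  set F : ℝ → ℝ := fun x => 5 * x + 2 * (1 - x) * Real.log (1 - x) with hF
  have key : StrictMonoOn F (Set.Icc r₀ r) := by
    apply strictMonoOn_of_deriv_pos (convex_Icc _ _)
    · apply ContinuousOn.add (by fun_prop)
      apply ContinuousOn.mul (by fun_prop)
      apply Real.continuousOn_log.comp (by fun_prop)
      intro x hx
      simp only [Set.mem_Icc] at hx
      have : x < 1 := lt_of_le_of_lt hx.2 hr2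
      simp; linarith
    · intro x hx
      rw [interior_Icc, Set.mem_Ioo] at hx
      have hx1 : x < 1 := lt_trans hx.2 hr2
      have hne : (1 : ℝ) - x ≠ 0 := by linarith
      have hd : HasDerivAt F (3 - 2 * Real.log (1 - x)) x := by
        have d1 : HasDerivAt (fun y : ℝ => 1 - y) (-1 : ℝ) x := by
          simpa using (hasDerivAt_id x).const_sub 1
        have d2 : HasDerivAt (fun y : ℝ => Real.log (1 - y)) (-(1 - x)⁻¹) x := by
          exact ((Real.hasDerivAt_log hne).comp x d1).congr_deriv (by ring)
        have d3 : HasDerivAt (fun y : ℝ => 2 * (1 - y) * Real.log (1 - y))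
            ((-2) * Real.log (1 - x) + 2 * (1 - x) * (-(1 - x)⁻¹)) x := by
          exact ((d1.const_mul 2).mul d2).congr_deriv (by ring)
        have d4 : HasDerivAt (fun y : ℝ => 5 * y) (5 : ℝ) x := by
          simpa using (hasDerivAt_id x).const_mul 5
        have := d4.add d3
        refine this.congr_deriv ?_
        linear_combination (-2) * mul_inv_cancel₀ hne
      rw [hd.deriv]
      have : Real.log (1 - x) < 0 := Real.log_neg (by linarith [hx.1, h0]) (by linarith)
      linarith
  have := key (Set.left_mem_Icc.2 hr1.le) (Set.right_mem_Icc.2 hr1.le) hr1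
  rw [hF] at this
  simp only at this
  linarith [hroot ▸ this]

private lemma choose_a11 {r : ℝ} (h0 : 0 < r) (hr2 : r < 1)
    (hbig : 1 < 5 * r + 2 * (1 - r) * Real.log (1 - r)) :
    ∃ a : ℝ, a ∈ Set.Ioo (0:ℝ) 1 ∧
      1 < (1 + a) * ((r + r^2)/(1 - a*r) + (Real.log (1 - a*r) + a*r)/a^2) := by
  set Q : ℝ → ℝ := fun a => (1 + a) * ((r + r^2)/(1 - a*r) + (Real.log (1 - a*r) + a*r)/a^2)
    with hQ
  have h1r : (0:ℝ) < 1 - r := by linarith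
  have hQ1 : 1 < Q 1 := by
    simp only [hQ, one_mul, one_pow, div_one]
    have hD : (r + r^2)/(1-r) * (1-r) = r + r^2 := div_mul_cancel₀ _ (by linarith)
    nlinarith [hbig, hD]
  have hc : ContinuousAt Q 1 := by
    apply ContinuousAt.mul (by fun_prop)
    apply ContinuousAt.add
    · apply ContinuousAt.div (by fun_prop) (by fun_prop)
      simp; linarith
    · apply ContinuousAt.div
      · apply ContinuousAt.add _ (by fun_prop)
        apply (Real.continuousAt_log (by simp; linarith)).comp (by fun_prop)
      · fun_prop
      · norm_num
  have hev : ∀ᶠ a in nhds (1:ℝ), 1 < Q a := hc.eventually_const_lt hQ1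
  have hne : (nhdsWithin (1:ℝ) (Set.Ioo 0 1)).NeBot := by
    rw [← mem_closure_iff_nhdsWithin_neBot, closure_Ioo (by norm_num : (0:ℝ) ≠ 1)]
    exact Set.right_mem_Icc.2 zero_le_one
  have h2 : ∀ᶠ a in nhdsWithin (1:ℝ) (Set.Ioo 0 1), a ∈ Set.Ioo (0:ℝ) 1 :=
    self_mem_nhdsWithin
  obtain ⟨a, ha1, ha2⟩ := ((eventually_nhdsWithin_of_eventually_nhds hev).and h2).exists
  exact ⟨a, ha2, ha1⟩

set_option maxHeartbeats 2000000 in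
/-- Sharpness of the radius `r₀` (the root of `5x + 2(1-x)log(1-x) = 1`): for every `r`
with `r₀ < r < 1` there are `h, g` analytic on the unit disk with `|h| < 1` and
`g'(z) = η z h'(z)` for some `|η| = 1`, such that
`|a₀| + ∑_{k≥1} (|aₖ| + |bₖ|) rᵏ > 1`. -/
theorem stmt11 (r₀ : ℝ) (hr₀ : r₀ ∈ Set.Ioo (0:ℝ) 1)
    (hroot : 5 * r₀ + 2 * (1 - r₀) * Real.log (1 - r₀) = 1)
    (r : ℝ) (hr1 : r₀ < r) (hr2 : r < 1) :
    ∃ (h g : ℂ → ℂ) (a b : ℕ → ℂ) (η : ℂ), b 0 = 0 ∧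
      (∀ z ∈ ball (0:ℂ) 1, HasSum (fun k => a k * z ^ k) (h z)) ∧
      (∀ z ∈ ball (0:ℂ) 1, HasSum (fun k => b k * z ^ k) (g z)) ∧
      DifferentiableOn ℂ h (ball (0:ℂ) 1) ∧
      DifferentiableOn ℂ g (ball (0:ℂ) 1) ∧
      (∀ z ∈ ball (0:ℂ) 1, ‖h z‖ < 1) ∧
      ‖η‖ = 1 ∧
      (∀ z ∈ ball (0:ℂ) 1, deriv g z = η * z * deriv h z) ∧
      1 < ‖a 0‖
        + (∑' k : ℕ, (‖a (k+1)‖ + ‖b (k+1)‖) * r ^ (k+1)) := by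
  have hr0 : 0 < r := lt_trans hr₀.1 hr1
  obtain ⟨a, ⟨ha0, ha1⟩, ha3⟩ :=
    choose_a11 hr0 hr2 (Fmono11 hr₀.1 hr1 hr2 hroot)
  set α : ℂ := (a : ℂ) with hα
  have hαa : ‖α‖ = a := by
    rw [hα, Complex.norm_real, Real.norm_eq_abs, abs_of_pos ha0]
  have hαne : α ≠ 0 := by
    simp only [hα, ne_eq, Complex.ofReal_eq_zero]; positivity
  set c : ℂ := (1 - α^2)/α^2 with hc
  -- definitions
  set A : ℕ → ℂ := fun k => if k = 0 then α else (1 - α^2) * (-α)^(k-1) with hA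
  set B : ℕ → ℂ := fun n => (1 - α^2) * (((n:ℂ)) - 1)/n * (-α)^(n-2) with hB
  refine ⟨fun z => (α + z)/(1 + α*z),
    fun z => c * (Complex.log (1 + α * z) + (1 + α * z)⁻¹ - 1),
    A, B, 1, by simp [hB], ?_, ?_, ?_, ?_, ?_, by simp, ?_, ?_⟩
  -- helper facts for points in the ball
  all_goals
    have hden : ∀ z : ℂ, ‖z‖ < 1 → (1 : ℂ) + α * z ≠ 0 := by
      intro z hz hcon
      have haz : ‖α * z‖ < 1 := by
        rw [norm_mul]
        have : ‖α‖ = a := hαa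
        rw [this]; nlinarith [norm_nonneg z]
      have : ‖α * z‖ = 1 := by
        have : α * z = -1 := by linear_combination hcon
        rw [this]; simp
      linarith
  · -- h power series
    intro z hz
    rw [mem_ball_zero_iff] at hz
    have haz : ‖α * z‖ < 1 := by
      rw [norm_mul]
      have : ‖α‖ = a := hαa
      rw [this]; nlinarith [norm_nonneg z]
    have geo : HasSum (fun k : ℕ => (-(α*z))^k) (1 - (-(α*z)))⁻¹ :=
      hasSum_geometric_of_norm_lt_one (by simpa using haz)
    have H1 := geo.mul_left ((1 - α^2) * z)
    have H2 : HasSum (fun k : ℕ =>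
        (if k + 1 = 0 then α else (1 - α^2) * (-α)^(k+1-1)) * z ^ (k+1))
        ((1 - α^2) * z * (1 - (-(α*z)))⁻¹) := by
      refine H1.congr_fun fun k => ?_
      simp only [Nat.add_sub_cancel, if_neg (Nat.succ_ne_zero k)]
      have e : (-(α*z))^k = (-α)^k * z^k := by rw [← neg_mul, mul_pow]
      rw [e, pow_succ]
      ring
    have H3 := (hasSum_nat_add_iff (f := fun k : ℕ =>
        (if k = 0 then α else (1 - α^2) * (-α)^(k-1)) * z ^ k) 1).mp H2
    simp only [Finset.range_one, Finset.sum_singleton, if_pos rfl, ↓reduceIte, pow_zero, mul_one] at H3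
    rw [hA]
    convert H3 using 1
    · rfl
    rw [sub_neg_eq_add]
    field_simp [hden z hz]
    ring
  · -- g power series
    intro z hz
    rw [mem_ball_zero_iff] at hz
    have haz : ‖α * z‖ < 1 := by
      rw [norm_mul]
      have : ‖α‖ = a := hαa
      rw [this]; nlinarith [norm_nonneg z]
    have hw : ‖-(α*z)‖ < 1 := by simpa using haz
    have S1 : HasSum (fun n : ℕ => (-(α*z))^n / n) (-Complex.log (1 - -(α*z))) :=
      Complex.hasSum_taylorSeries_neg_log hw
    have S2 : HasSum (fun n : ℕ => (-(α*z))^n) (1 - -(α*z))⁻¹ :=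
      hasSum_geometric_of_norm_lt_one hw
    have S3 := ((S2.sub S1).mul_left c)
    have sum2 : ∑ i ∈ Finset.range 2, c * ((-(α*z))^i - (-(α*z))^i / (i:ℂ)) = c := by
      simp [Finset.sum_range_succ]
    have S4 : HasSum (fun n : ℕ => c * ((-(α*z))^(n+2) - (-(α*z))^(n+2) / (((n+2:ℕ)):ℂ)))
        (c * ((1 - -(α*z))⁻¹ - -Complex.log (1 - -(α*z))) - c) := by
      refine (hasSum_nat_add_iff
        (f := fun n : ℕ => c * ((-(α*z))^n - (-(α*z))^n / (n:ℂ))) 2).mpr ?_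
      rw [sum2]
      convert S3 using 1
      · rfl
      ring
    have S5 : HasSum (fun n : ℕ =>
        ((1 - α^2) * (((((n+2):ℕ)):ℂ) - 1)/((n+2):ℕ) * (-α)^((n+2)-2)) * z ^ (n+2))
        (c * ((1 - -(α*z))⁻¹ - -Complex.log (1 - -(α*z))) - c) := by
      refine S4.congr_fun fun n => ?_
      have hn2 : (((n+2:ℕ)):ℂ) ≠ 0 := Nat.cast_ne_zero.mpr (by omega)
      have e : (-(α*z))^(n+2) = (-α)^(n+2) * z^(n+2) := by rw [← neg_mul, mul_pow]
      have e2 : (-α)^(n+2) = α^2 * (-α)^n := by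
        rw [pow_add]; ring
      have key : c * α^2 = 1 - α^2 := div_mul_cancel₀ _ (pow_ne_zero 2 hαne)
      simp only [Nat.add_sub_cancel, e, e2]
      rw [← key]
      push_cast at hn2 ⊢
      field_simp
    have S6 := (hasSum_nat_add_iff (f := fun n : ℕ =>
        ((1 - α^2) * (((n:ℂ)) - 1)/n * (-α)^(n-2)) * z ^ n) 2).mp S5
    have hzero : ∑ i ∈ Finset.range 2,
        ((1 - α^2) * (((i:ℂ)) - 1)/i * (-α)^(i-2)) * z ^ i = 0 := by
      simp [Finset.sum_range_succ]
    rw [hzero, add_zero] at S6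
    rw [hB]
    convert S6 using 1
    · rfl
    rw [sub_neg_eq_add]
    ring
  · -- h differentiable
    intro z hz
    rw [mem_ball_zero_iff] at hz
    exact (((differentiable_const α).add differentiable_id).differentiableAt.div
      (((differentiable_const (1:ℂ)).add ((differentiable_const α).mul
        differentiable_id)).differentiableAt) (by simpa using hden z hz)).differentiableWithinAt
  · -- g differentiable
    intro z hz
    rw [mem_ball_zero_iff] at hz
    have hslit : (1 + α * z) ∈ Complex.slitPlane := by
      rw [Complex.mem_slitPlane_iff]
      left
      have : (1 + α * z).re = 1 + a * z.re := by simp [hα]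
      rw [this]
      have h2 : |z.re| < 1 := lt_of_le_of_lt (Complex.abs_re_le_norm z) hz
      rw [abs_lt] at h2
      nlinarith
    have d2 : DifferentiableAt ℂ (fun w : ℂ => 1 + α * w) z :=
      ((differentiable_const (1:ℂ)).add ((differentiable_const α).mul
        differentiable_id)).differentiableAt
    exact ((((d2.clog hslit).add (d2.inv (hden z hz))).sub
      (differentiableAt_const 1)).const_mul c).differentiableWithinAt
  · -- |h| < 1
    intro z hz
    rw [mem_ball_zero_iff] at hz
    show ‖(α + z) / (1 + α * z)‖ < 1
    rw [norm_div, div_lt_one (norm_pos_iff.mpr (hden z hz))]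
    rw [Complex.norm_def, Complex.norm_def]
    apply Real.sqrt_lt_sqrt (Complex.normSq_nonneg _)
    have hz2 : z.re^2 + z.im^2 < 1 := by
      have h1 : ‖z‖ < 1 := hz
      nlinarith [Complex.sq_norm z, Complex.normSq_apply z, norm_nonneg z]
    simp only [Complex.normSq_apply, Complex.add_re, Complex.add_im, Complex.mul_re,
      Complex.mul_im, Complex.one_re, Complex.one_im, Complex.ofReal_re, Complex.ofReal_im, hα]
    nlinarith [mul_pos (by nlinarith : (0:ℝ) < 1 - a^2)
      (by nlinarith : (0:ℝ) < 1 - z.re^2 - z.im^2)]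
  · -- derivative identity
    intro z hz
    rw [mem_ball_zero_iff] at hz
    have hdz := hden z hz
    have hslit : (1 + α * z) ∈ Complex.slitPlane := by
      rw [Complex.mem_slitPlane_iff]
      left
      have : (1 + α * z).re = 1 + a * z.re := by simp [hα]
      rw [this]
      have h2 : |z.re| < 1 := lt_of_le_of_lt (Complex.abs_re_le_norm z) hz
      rw [abs_lt] at h2
      nlinarith
    have hd : HasDerivAt (fun w => (α + w)/(1 + α * w)) ((1 - α^2)/(1 + α*z)^2) z := by
      have d1 : HasDerivAt (fun w : ℂ => α + w) 1 z := (hasDerivAt_id z).const_add α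
      have d2 : HasDerivAt (fun w : ℂ => 1 + α * w) α z := by
        simpa using ((hasDerivAt_id z).const_mul α).const_add 1
      have := d1.div d2 hdz
      refine this.congr_deriv ?_
      ring
    have hgd : HasDerivAt (fun w => c * (Complex.log (1 + α * w) + (1 + α * w)⁻¹ - 1))
        (c * (α / (1 + α*z) + (-α / (1 + α*z)^2))) z := by
      have d2 : HasDerivAt (fun w : ℂ => 1 + α * w) α z := by
        simpa using ((hasDerivAt_id z).const_mul α).const_add 1
      exact (((d2.clog hslit).add (d2.inv hdz)).sub_const 1).const_mul c
    rw [hgd.deriv, hd.deriv, hc]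
    field_simp
    ring
  · -- the coefficient inequality
    clear hden
    set ρ := a * r with hρ
    have hρ0 : 0 < ρ := mul_pos ha0 hr0
    have hρ1 : ρ < 1 := by nlinarith
    have hρa : |ρ| < 1 := by rw [abs_of_pos hρ0]; exact hρ1
    have geo : HasSum (fun k : ℕ => ρ^k) (1 - ρ)⁻¹ :=
      hasSum_geometric_of_lt_one hρ0.le hρ1
    have ha2pos : (0:ℝ) < 1 - a^2 := by nlinarith
    -- |A (k+1)|
    have absA : ∀ k : ℕ, ‖A (k+1)‖ = (1-a^2) * a^k := by
      intro k
      rw [hA]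
      simp only [Nat.add_sub_cancel, if_neg (Nat.succ_ne_zero k)]
      rw [norm_mul, norm_pow, norm_neg, hαa]
      have : (1 : ℂ) - α^2 = ((1 - a^2 : ℝ) : ℂ) := by push_cast [hα]; ring
      rw [this, Complex.norm_real, Real.norm_eq_abs, abs_of_pos ha2pos]
    -- |B (k+2)|
    have absB : ∀ k : ℕ, ‖B (k+1+1)‖ = (1-a^2) * (((k:ℝ)+1)/((k:ℝ)+2)) * a^k := by
      intro k
      rw [hB]
      have e1 : ((((k+1+1:ℕ)):ℂ)) - 1 = (((k+1 : ℝ)):ℂ) := by push_cast; ring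
      have e2 : ((((k+1+1:ℕ)):ℂ)) = (((k+2 : ℝ)):ℂ) := by push_cast; ring
      simp only [show k+1+1-2 = k from rfl]
      rw [norm_mul, norm_div, norm_mul, norm_pow, norm_neg, hαa, e1, e2,
        Complex.norm_real, Real.norm_eq_abs, Complex.norm_real, Real.norm_eq_abs]
      have : (1 : ℂ) - α^2 = ((1 - a^2 : ℝ) : ℂ) := by push_cast [hα]; ring
      rw [this, Complex.norm_real, Real.norm_eq_abs, abs_of_pos ha2pos,
        abs_of_pos (by positivity : (0:ℝ) < (k:ℝ)+1),
        abs_of_pos (by positivity : (0:ℝ) < (k:ℝ)+2)]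
      ring
    have absB1 : ‖B 1‖ = 0 := by
      rw [hB]; norm_num
    -- series for A part
    have TA : HasSum (fun k : ℕ => ‖A (k+1)‖ * r^(k+1))
        ((1-a^2) * r * (1 - ρ)⁻¹) := by
      have H := geo.mul_left ((1-a^2) * r)
      refine H.congr_fun fun k => ?_
      rw [absA k, hρ, mul_pow, pow_succ]
      ring
    -- series for B part
    have L0 : HasSum (fun n : ℕ => ρ^(n+1)/((n:ℝ)+1)) (-Real.log (1-ρ)) :=
      Real.hasSum_pow_div_log_of_abs_lt_one hρa
    have L1 : HasSum (fun n : ℕ => ρ^(n+2)/((n:ℝ)+2)) (-Real.log (1-ρ) - ρ) := by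
      have step : HasSum (fun n : ℕ => ρ^((n+1)+1)/(((n+1:ℕ):ℝ)+1)) (-Real.log (1-ρ) - ρ) := by
        refine (hasSum_nat_add_iff (f := fun n : ℕ => ρ^(n+1)/((n:ℝ)+1)) 1).mpr ?_
        have h1 : ∑ i ∈ Finset.range 1, ρ^(i+1)/((i:ℝ)+1) = ρ := by simp
        rw [h1, sub_add_cancel]
        exact L0
      refine step.congr_fun fun n => ?_
      push_cast
      ring_nf
    have G2 : HasSum (fun n : ℕ => ρ^(n+2)) (ρ^2 * (1-ρ)⁻¹) := by
      have := geo.mul_left (ρ^2)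
      refine this.congr_fun fun n => ?_
      rw [pow_add]; ring
    set cr : ℝ := (1-a^2)/a^2 with hcr
    have T2' : HasSum (fun k : ℕ => ‖B (k+1+1)‖ * r^(k+1+1))
        (cr * (ρ^2 * (1-ρ)⁻¹ + Real.log (1-ρ) + ρ)) := by
      have H := (G2.sub L1).mul_left cr
      have hval : cr * (ρ^2 * (1-ρ)⁻¹ - (-Real.log (1-ρ) - ρ))
          = cr * (ρ^2 * (1-ρ)⁻¹ + Real.log (1-ρ) + ρ) := by ring
      rw [hval] at H
      refine H.congr_fun fun k => ?_
      have ha2 : a^2 ≠ 0 := by positivity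
      rw [absB k, hρ, hcr]
      field_simp
      ring
    have TB : HasSum (fun k : ℕ => ‖B (k+1)‖ * r^(k+1))
        (cr * (ρ^2 * (1-ρ)⁻¹ + Real.log (1-ρ) + ρ)) := by
      have H := (hasSum_nat_add_iff
        (f := fun k : ℕ => ‖B (k+1)‖ * r^(k+1)) 1).mp T2'
      simpa [absB1] using H
    -- combine
    have TAB := TA.add TB
    have Tfin : HasSum (fun k : ℕ => (‖A (k+1)‖ + ‖B (k+1)‖) * r^(k+1))
        ((1-a^2) * r * (1 - ρ)⁻¹ + cr * (ρ^2 * (1-ρ)⁻¹ + Real.log (1-ρ) + ρ)) := by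
      refine TAB.congr_fun fun k => ?_
      ring
    rw [Tfin.tsum_eq]
    have hA0 : ‖A 0‖ = a := by rw [hA]; simpa using hαa
    rw [hA0]
    -- final arithmetic
    set L := Real.log (1-ρ) with hL
    have h1ρ : (0:ℝ) < 1 - ρ := by linarith
    have key : (1-a^2) * r * (1 - ρ)⁻¹ + cr * (ρ^2 * (1-ρ)⁻¹ + L + ρ)
        = (1-a^2) * ((r+r^2)/(1-ρ) + (L+ρ)/a^2) := by
      rw [hcr, hρ]
      field_simp
      ring
    rw [key]
    have h2 : (1-a) * 1 < (1-a) * ((1+a) * ((r+r^2)/(1-ρ) + (L+ρ)/a^2)) := by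
      apply mul_lt_mul_of_pos_left _ (by linarith)
      rw [hρ, hL] at *
      exact ha3
    nlinarith [h2]
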